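/- arXiv:1903.10796 — 2 statements merged into one kernel-verified Lean document; each statement's English description precedes it below -/
import Mathlib

section
/- Let G=(V,w,m) be a connected, locally finite weighted graph with Deg_max < ∞, and let x₀ ≠ y₀ be vertices. Then the Ollivier curvature satisfies the duality κ(x₀,y₀) = sup_ρ Σ_{x ∈ B₁(x₀), y ∈ B₁(y₀)} ρ(x,y)·[1 − d(x,y)/d(x₀,y₀)], where the supremum is taken over all transport plans ρ between x₀ and y₀. -/
open scoped BigOperators

/-- A weighted graph `G = (V, w, m)`: a symmetric edge-weight function `w`
vanishing on the diagonal, a positive vertex measure `m`, and local finiteness. -/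
structure WeightedGraph (V : Type*) where
  w : V → V → ℝ
  m : V → ℝ
  w_symm : ∀ x y, w x y = w y x
  w_nonneg : ∀ x y, 0 ≤ w x y
  w_diag : ∀ x, w x x = 0
  m_pos : ∀ x, 0 < m x
  locFin : ∀ x, {y | 0 < w x y}.Finite

open scoped RealInnerProductSpace

/-- Farkas-type alternative for finite linear programs in standard equality form,
under a condition guaranteeing that the image of the positive orthant is closed. -/
theorem lp_farkas_alternative {ι κ : Type*} [Fintype ι] [Fintype κ] [DecidableEq ι]
    [DecidableEq κ] (N : Matrix κ ι ℝ) (b : κ → ℝ)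
    (hrow : ∀ i, ∃ k, N k i = 1 ∧ ∀ i', 0 ≤ N k i') :
    (∃ v : ι → ℝ, (∀ i, 0 ≤ v i) ∧ ∀ k, ∑ i, N k i * v i = b k) ∨
    (∃ y : κ → ℝ, (∀ i, 0 ≤ ∑ k, N k i * y k) ∧ ∑ k, y k * b k < 0) := by
  classical
  let E := EuclideanSpace ℝ ι
  let F := EuclideanSpace ℝ κ
  have hfin : FiniteDimensional ℝ (EuclideanSpace ℝ ι) := by infer_instance
  set fL : EuclideanSpace ℝ ι →ₗ[ℝ] EuclideanSpace ℝ κ := Matrix.toEuclideanLin N with hfL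
  set fC : EuclideanSpace ℝ ι →L[ℝ] EuclideanSpace ℝ κ :=
    LinearMap.toContinuousLinearMap fL with hfC
  have happly : ∀ (v : EuclideanSpace ℝ ι) (k : κ), fC v k = ∑ i, N k i * v i := by
    intro v k
    show (Matrix.toEuclideanLin N v) k = _
    simp [Matrix.toEuclideanLin_apply, Matrix.mulVec, dotProduct]
  set K : ProperCone ℝ E :=
    { carrier := {v : E | ∀ i, 0 ≤ v i}
      add_mem' := fun {u} {w} hu hw i => by
        have h : (u + w) i = u i + w i := rfl
        rw [h]; exact add_nonneg (hu i) (hw i)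
      zero_mem' := fun i => le_of_eq rfl
      smul_mem' := fun c {v} hv i => by
        have h : (c • v) i = (c : ℝ) * v i := rfl
        rw [h]; exact mul_nonneg c.2 (hv i)
      isClosed' := by
        show IsClosed {v : E | ∀ i, 0 ≤ v i}
        have h : {v : E | ∀ i, 0 ≤ v i} = ⋂ i, {v : E | 0 ≤ v i} := by
          ext v; simp [Set.mem_iInter]
        rw [h]
        refine isClosed_iInter (fun i => isClosed_le continuous_const ?_)
        exact (continuous_apply i).comp (PiLp.continuousLinearEquiv 2 ℝ _).continuous
    } with hK
  have hKmem : ∀ v : E, v ∈ K ↔ ∀ i, 0 ≤ v i := fun v => Iff.rfl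
  set bE : F := (WithLp.equiv 2 (κ → ℝ)).symm b with hbE
  have hbEk : ∀ k, bE k = b k := fun k => rfl
  by_cases hb : bE ∈ K.map fC
  · -- extract an exact solution using closedness of the image of the orthant
    left
    rw [ProperCone.mem_map, PointedCone.mem_closure, PointedCone.coe_map,
      ContinuousLinearMap.coe_coe, mem_closure_iff_seq_limit] at hb
    obtain ⟨x, hxmem, hxt⟩ := hb
    choose v hvK hfv using fun n => (Set.mem_image _ _ _).mp (hxmem n)
    -- coordinatewise bounds
    have hcoordt : ∀ k : κ, Filter.Tendsto (fun n => x n k) Filter.atTop (nhds (bE k)) := by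
      intro k
      have hc : Continuous fun w : F => w k :=
        (continuous_apply k).comp (PiLp.continuousLinearEquiv 2 ℝ _).continuous
      exact (hc.tendsto bE).comp hxt
    have hbd : ∀ i : ι, ∃ C : ℝ, ∀ n, v n i ≤ C := by
      intro i
      obtain ⟨k, hk1, hknn⟩ := hrow i
      obtain ⟨C, hC⟩ := (hcoordt k).bddAbove_range
      refine ⟨C, fun n => ?_⟩
      have h1 : v n i ≤ fC (v n) k := by
        rw [happly (v n) k]
        calc v n i = N k i * v n i := by rw [hk1, one_mul]
          _ ≤ ∑ i', N k i' * v n i' := by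
              apply Finset.single_le_sum (f := fun i' => N k i' * v n i')
              · exact fun j _ => mul_nonneg (hknn j) (hvK n j)
              · exact Finset.mem_univ i
      rw [hfv n] at h1
      exact h1.trans (hC (Set.mem_range_self n))
    choose C hC using hbd
    -- the box is compact
    set s : Set E := (PiLp.continuousLinearEquiv 2 ℝ (fun _ : ι => ℝ)).toHomeomorph ⁻¹'
      (Set.univ.pi fun i => Set.Icc (0:ℝ) (C i)) with hs
    have hscomp : IsCompact s := by
      rw [hs, Homeomorph.isCompact_preimage]
      exact isCompact_univ_pi (fun i => isCompact_Icc)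
    have hvs : ∀ n, v n ∈ s := by
      intro n
      refine Set.mem_preimage.mpr (Set.mem_univ_pi.mpr fun i => ?_)
      exact ⟨hvK n i, hC i n⟩
    obtain ⟨w, hws, φ, hφ, hwt⟩ := hscomp.tendsto_subseq hvs
    have hww : ∀ i, 0 ≤ w i := by
      intro i
      exact (Set.mem_univ_pi.mp (Set.mem_preimage.mp hws) i).1
    have hfw : fC w = bE := by
      have h1 : Filter.Tendsto (fun m => fC (v (φ m))) Filter.atTop (nhds (fC w)) :=
        (fC.continuous.tendsto w).comp hwt
      have h2 : Filter.Tendsto (fun m => fC (v (φ m))) Filter.atTop (nhds bE) := by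
        have : (fun m => fC (v (φ m))) = fun m => x (φ m) := by
          funext m; exact hfv (φ m)
        rw [this]
        exact hxt.comp (hφ.tendsto_atTop)
      exact tendsto_nhds_unique h1 h2
    refine ⟨fun i => w i, hww, fun k => ?_⟩
    rw [← happly w k, hfw, hbEk]
  · -- Farkas separation
    right
    obtain ⟨y, hyd, hyb⟩ := ProperCone.hyperplane_separation_of_notMem K hb
    have hinner : ∀ (u w : EuclideanSpace ℝ κ), ⟪u, w⟫ = ∑ k, u k * w k := by
      intro u w
      simp [PiLp.inner_apply, RCLike.inner_apply, starRingEnd_apply]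
      exact Finset.sum_congr rfl (fun _ _ => mul_comm _ _)
    refine ⟨fun k => y k, ?_, ?_⟩
    · intro i
      set e : E := EuclideanSpace.single i (1:ℝ) with he
      have heK : e ∈ K := by
        rw [hKmem]
        intro j
        rw [he, EuclideanSpace.single_apply]
        split <;> norm_num
      have h0 : 0 ≤ ⟪e, ContinuousLinearMap.adjoint fC y⟫ := (ProperCone.mem_dual.mp hyd) heK
      rw [ContinuousLinearMap.adjoint_inner_right, hinner] at h0
      have hsum : ∑ k, fC e k * y k = ∑ k, N k i * y k := by
        apply Finset.sum_congr rfl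
        intro k _
        rw [happly]
        congr 1
        rw [show ∑ i', N k i' * e i' = ∑ i', N k i' * (if i' = i then 1 else 0) from
          Finset.sum_congr rfl (fun i' _ => by rw [he, EuclideanSpace.single_apply])]
        simp
      rwa [hsum] at h0
    · rw [hinner] at hyb
      simpa [hbEk, mul_comm] using hyb

namespace WeightedGraph

variable {V : Type*} (G : WeightedGraph V)

/-- Adjacency: `x ~ y` iff `w x y > 0`. -/
def Adj (x y : V) : Prop := 0 < G.w x y

/-- The underlying simple graph. -/
def toSimpleGraph : SimpleGraph V where
  Adj x y := 0 < G.w x y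
  symm := by constructor; intro x y h; rw [G.w_symm y x]; exact h
  loopless := by constructor; intro x h; rw [G.w_diag] at h; exact lt_irrefl 0 h

/-- Combinatorial graph distance. -/
noncomputable def d (x y : V) : ℕ := G.toSimpleGraph.dist x y

/-- Transition rate `q(x,y) = w(x,y)/m(x)`. -/
noncomputable def q (x y : V) : ℝ := G.w x y / G.m x

/-- The graph Laplacian `Δf(x) = Σ_y q(x,y) (f(y) - f(x))`. -/
noncomputable def lap (f : V → ℝ) (x : V) : ℝ := ∑ᶠ y, G.q x y * (f y - f x)

/-- The weighted vertex degree `Deg(x) = Σ_y q(x,y)`. -/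
noncomputable def Deg (x : V) : ℝ := ∑ᶠ y, G.q x y

/-- The maximal weighted vertex degree. -/
noncomputable def DegMax : ℝ := ⨆ x, G.Deg x

/-- The minimal transition rate over edges, `q_min = inf_{x ~ y} q(x,y)`. -/
noncomputable def qMin : ℝ := sInf {r : ℝ | ∃ x y, G.Adj x y ∧ r = G.q x y}

/-- `‖∇f‖_∞ = sup_{x ~ y} (f x - f y)/d(x,y)`. -/
noncomputable def gradNorm (f : V → ℝ) : ℝ :=
  sSup {r : ℝ | ∃ x y, G.Adj x y ∧ r = (f x - f y) / (G.d x y : ℝ)}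

/-- The Ollivier curvature
`κ(x,y) = inf { ∇_{xy} Δf : ∇_{yx} f = 1, ‖∇f‖_∞ = 1 }`. -/
noncomputable def kappa (x y : V) : ℝ :=
  sInf {r : ℝ | ∃ f : V → ℝ,
    (f y - f x) / (G.d y x : ℝ) = 1 ∧ G.gradNorm f = 1 ∧
    r = (G.lap f x - G.lap f y) / (G.d x y : ℝ)}

/-- A function is harmonic if `Δf = 0`. -/
def Harmonic (f : V → ℝ) : Prop := ∀ x, G.lap f x = 0

/-- A transport plan between `x₀ ≠ y₀`: a nonnegative function supported on
`B₁(x₀) × B₁(y₀)` whose marginals on the spheres `S₁(x₀)`, `S₁(y₀)` are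
`q(x₀,·)` and `q(y₀,·)` respectively. -/
def IsTransportPlan (x₀ y₀ : V) (ρ : V → V → ℝ) : Prop :=
  (∀ x y, 0 ≤ ρ x y) ∧
  (∀ x y, ρ x y ≠ 0 → G.d x₀ x ≤ 1 ∧ G.d y₀ y ≤ 1) ∧
  (∀ x, G.d x₀ x = 1 → ∑ᶠ y, ρ x y = G.q x₀ x) ∧
  (∀ y, G.d y₀ y = 1 → ∑ᶠ x, ρ x y = G.q y₀ y)

/-- The transport functional `Σ_{x,y} ρ(x,y) (1 - d(x,y)/d(x₀,y₀))`. -/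
noncomputable def transportCost (x₀ y₀ : V) (ρ : V → V → ℝ) : ℝ :=
  ∑ᶠ x, ∑ᶠ y, ρ x y * (1 - (G.d x y : ℝ) / (G.d x₀ y₀ : ℝ))

/-- An optimal transport plan attains the supremum of the transport functional. -/
def IsOptimalTransportPlan (x₀ y₀ : V) (ρ : V → V → ℝ) : Prop :=
  G.IsTransportPlan x₀ y₀ ρ ∧
  ∀ ρ' : V → V → ℝ, G.IsTransportPlan x₀ y₀ ρ' →
    G.transportCost x₀ y₀ ρ' ≤ G.transportCost x₀ y₀ ρ

end WeightedGraph

namespace WeightedGraph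

variable {V : Type*} (G : WeightedGraph V)

lemma q_nonneg' (x y : V) : 0 ≤ G.q x y := div_nonneg (G.w_nonneg x y) (G.m_pos x).le

lemma q_eq_zero_of_not_adj {x y : V} (h : ¬ G.Adj x y) : G.q x y = 0 := by
  have : G.w x y = 0 := le_antisymm (not_lt.mp h) (G.w_nonneg x y)
  simp [q, this]

lemma adj_of_q_ne_zero {x y : V} (h : G.q x y ≠ 0) : G.Adj x y := by
  by_contra hc; exact h (G.q_eq_zero_of_not_adj hc)

lemma not_adj_self (x : V) : ¬ G.Adj x x := by
  intro h; unfold Adj at h; rw [G.w_diag] at h; exact lt_irrefl 0 h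

lemma dist_eq_one_iff {x y : V} : G.d x y = 1 ↔ G.Adj x y :=
  SimpleGraph.dist_eq_one_iff_adj

lemma dist_le_one_iff (hconn : G.toSimpleGraph.Connected) {x y : V} :
    G.d x y ≤ 1 ↔ x = y ∨ G.Adj x y := by
  constructor
  · intro h
    rcases Nat.le_one_iff_eq_zero_or_eq_one.mp h with h0 | h1
    · exact Or.inl ((hconn.dist_eq_zero_iff).mp h0)
    · exact Or.inr (G.dist_eq_one_iff.mp h1)
  · rintro (rfl | h)
    · simp [d, SimpleGraph.dist_self]
    · exact le_of_eq (G.dist_eq_one_iff.mpr h)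

lemma sub_le_walk_length (f : V → ℝ) (hf : ∀ a b, G.Adj a b → f a - f b ≤ 1) :
    ∀ {a b : V} (p : G.toSimpleGraph.Walk a b), f a - f b ≤ (p.length : ℝ) := by
  intro a b p
  induction p with
  | nil => simp
  | @cons u v w h q ih =>
    have h1 : f u - f v ≤ 1 := hf u v h
    have h2 : (q.cons h).length = q.length + 1 := SimpleGraph.Walk.length_cons h q
    rw [h2]; push_cast; linarith

lemma sub_le_dist (hconn : G.toSimpleGraph.Connected) (f : V → ℝ)
    (hf : ∀ a b, G.Adj a b → f a - f b ≤ 1) (a b : V) :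
    f a - f b ≤ (G.d a b : ℝ) := by
  obtain ⟨p, hp⟩ := hconn.exists_walk_length_eq_dist a b
  have := G.sub_le_walk_length f hf p
  rw [hp] at this; exact this

lemma exists_edge_eq_one (hconn : G.toSimpleGraph.Connected) (f : V → ℝ)
    (hf : ∀ a b, G.Adj a b → f a - f b ≤ 1) {a b : V} (hab : a ≠ b)
    (hfd : f a - f b = (G.d a b : ℝ)) : ∃ u v, G.Adj u v ∧ f u - f v = 1 := by
  obtain ⟨p, hp⟩ := hconn.exists_walk_length_eq_dist a b
  rw [show G.d a b = p.length from hp.symm] at hfd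
  have hpos : 0 < p.length := by
    rw [hp]; exact hconn.pos_dist_of_ne hab
  cases p with
  | nil => simp at hpos
  | @cons u v w h q =>
    refine ⟨a, v, h, ?_⟩
    have h1 : f v - f b ≤ (q.length : ℝ) := G.sub_le_walk_length f hf q
    have h2 : f a - f v ≤ 1 := hf a v h
    have h3 : ((q.cons h).length : ℝ) = (q.length : ℝ) + 1 := by
      rw [SimpleGraph.Walk.length_cons]; push_cast; ring
    rw [h3] at hfd
    linarith

lemma gradNorm_eq_one (f : V → ℝ) (hf : ∀ a b, G.Adj a b → f a - f b ≤ 1)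
    (hex : ∃ u v, G.Adj u v ∧ f u - f v = 1) : G.gradNorm f = 1 := by
  obtain ⟨u, v, huv, hfu⟩ := hex
  have hel : ∀ r ∈ {r : ℝ | ∃ x y, G.Adj x y ∧ r = (f x - f y) / (G.d x y : ℝ)}, r ≤ 1 := by
    rintro r ⟨x, y, hxy, rfl⟩
    rw [G.dist_eq_one_iff.mpr hxy]
    simpa using hf x y hxy
  refine le_antisymm (Real.sSup_le hel one_pos.le) ?_
  apply le_csSup ⟨1, hel⟩
  exact ⟨u, v, huv, by rw [G.dist_eq_one_iff.mpr huv]; simp [hfu]⟩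

lemma edge_le_of_gradNorm (f : V → ℝ) (hg : G.gradNorm f = 1) :
    ∀ a b, G.Adj a b → f a - f b ≤ 1 := by
  intro a b hab
  by_cases hbdd : BddAbove {r : ℝ | ∃ x y, G.Adj x y ∧ r = (f x - f y) / (G.d x y : ℝ)}
  · have hmem : (f a - f b) / (G.d a b : ℝ) ∈
        {r : ℝ | ∃ x y, G.Adj x y ∧ r = (f x - f y) / (G.d x y : ℝ)} := ⟨a, b, hab, rfl⟩
    have := le_csSup hbdd hmem
    rw [show sSup {r : ℝ | ∃ x y, G.Adj x y ∧ r = (f x - f y) / (G.d x y : ℝ)} = G.gradNorm f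
      from rfl, hg] at this
    rwa [G.dist_eq_one_iff.mpr hab, Nat.cast_one, div_one] at this
  · exfalso
    rw [gradNorm, Real.sSup_of_not_bddAbove hbdd] at hg
    exact one_ne_zero hg.symm

/-- The sphere of radius 1 around `x`, as a finset. -/
noncomputable def sph (x : V) : Finset V := (G.locFin x).toFinset

/-- The ball of radius 1 around `x`, as a finset. -/
noncomputable def ball1 (x : V) : Finset V :=
  letI := Classical.decEq V; insert x (G.sph x)

lemma mem_sph {x z : V} : z ∈ G.sph x ↔ G.Adj x z := by
  simp only [sph, Set.Finite.mem_toFinset]; exact Iff.rfl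

lemma not_mem_sph_self (x : V) : x ∉ G.sph x := fun h => G.not_adj_self x (G.mem_sph.mp h)

lemma mem_ball1 {x z : V} : z ∈ G.ball1 x ↔ z = x ∨ G.Adj x z := by
  simp only [ball1, Finset.mem_insert, G.mem_sph]

lemma mem_ball1_iff_dist (hconn : G.toSimpleGraph.Connected) {x z : V} :
    z ∈ G.ball1 x ↔ G.d x z ≤ 1 := by
  rw [G.mem_ball1, G.dist_le_one_iff hconn, eq_comm]

lemma lap_eq_sum_sph (f : V → ℝ) (x : V) :
    G.lap f x = ∑ z ∈ G.sph x, G.q x z * (f z - f x) := by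
  apply finsum_eq_sum_of_support_subset
  intro y hy
  simp only [Function.mem_support] at hy
  have hq : G.q x y ≠ 0 := fun h => hy (by rw [h, zero_mul])
  rw [Finset.mem_coe, G.mem_sph]
  exact G.adj_of_q_ne_zero hq

variable {x₀ y₀ : V}

lemma plan_row_sum (hconn : G.toSimpleGraph.Connected) {ρ : V → V → ℝ}
    (hρ : G.IsTransportPlan x₀ y₀ ρ) (x : V) :
    ∑ᶠ y, ρ x y = ∑ y ∈ G.ball1 y₀, ρ x y := by
  apply finsum_eq_sum_of_support_subset
  intro y hy
  simp only [Function.mem_support] at hy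
  rw [Finset.mem_coe, G.mem_ball1_iff_dist hconn]
  exact (hρ.2.1 x y hy).2

lemma plan_col_sum (hconn : G.toSimpleGraph.Connected) {ρ : V → V → ℝ}
    (hρ : G.IsTransportPlan x₀ y₀ ρ) (y : V) :
    ∑ᶠ x, ρ x y = ∑ x ∈ G.ball1 x₀, ρ x y := by
  apply finsum_eq_sum_of_support_subset
  intro x hx
  simp only [Function.mem_support] at hx
  rw [Finset.mem_coe, G.mem_ball1_iff_dist hconn]
  exact (hρ.2.1 x y hx).1

lemma cost_eq_sum (hconn : G.toSimpleGraph.Connected) {ρ : V → V → ℝ}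
    (hρ : G.IsTransportPlan x₀ y₀ ρ) :
    G.transportCost x₀ y₀ ρ = ∑ x ∈ G.ball1 x₀, ∑ y ∈ G.ball1 y₀,
      ρ x y * (1 - (G.d x y : ℝ) / (G.d x₀ y₀ : ℝ)) := by
  unfold transportCost
  have hinner : ∀ x : V, ∑ᶠ y, ρ x y * (1 - (G.d x y : ℝ) / (G.d x₀ y₀ : ℝ))
      = ∑ y ∈ G.ball1 y₀, ρ x y * (1 - (G.d x y : ℝ) / (G.d x₀ y₀ : ℝ)) := by
    intro x
    apply finsum_eq_sum_of_support_subset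
    intro y hy
    simp only [Function.mem_support] at hy
    have hne : ρ x y ≠ 0 := fun h => hy (by rw [h, zero_mul])
    rw [Finset.mem_coe, G.mem_ball1_iff_dist hconn]
    exact (hρ.2.1 x y hne).2
  rw [finsum_congr hinner]
  apply finsum_eq_sum_of_support_subset
  intro x hx
  simp only [Function.mem_support] at hx
  rw [Finset.mem_coe, G.mem_ball1_iff_dist hconn]
  by_contra hc
  apply hx
  apply Finset.sum_eq_zero
  intro y _
  have : ρ x y = 0 := by
    by_contra hne
    exact hc (hρ.2.1 x y hne).1
  rw [this, zero_mul]

lemma plan_pairing (hconn : G.toSimpleGraph.Connected) {ρ : V → V → ℝ}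
    (hρ : G.IsTransportPlan x₀ y₀ ρ) (g h : V → ℝ) (hg : g x₀ = 0) (hh : h y₀ = 0) :
    ∑ x ∈ G.ball1 x₀, ∑ y ∈ G.ball1 y₀, ρ x y * (g x + h y)
      = ∑ x ∈ G.sph x₀, G.q x₀ x * g x + ∑ y ∈ G.sph y₀, G.q y₀ y * h y := by
  classical
  have hsplit : ∀ x ∈ G.ball1 x₀, ∑ y ∈ G.ball1 y₀, ρ x y * (g x + h y)
      = (∑ y ∈ G.ball1 y₀, ρ x y) * g x + ∑ y ∈ G.ball1 y₀, ρ x y * h y := by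
    intro x _
    rw [Finset.sum_mul, ← Finset.sum_add_distrib]
    apply Finset.sum_congr rfl
    intro y _; ring
  rw [Finset.sum_congr rfl hsplit, Finset.sum_add_distrib]
  congr 1
  · rw [show G.ball1 x₀ = letI := Classical.decEq V; insert x₀ (G.sph x₀) from rfl,
      Finset.sum_insert (G.not_mem_sph_self x₀), hg, mul_zero, zero_add]
    apply Finset.sum_congr rfl
    intro x hx
    have hadj : G.Adj x₀ x := G.mem_sph.mp hx
    have hd : G.d x₀ x = 1 := G.dist_eq_one_iff.mpr hadj
    rw [← G.plan_row_sum hconn hρ x, hρ.2.2.1 x hd, mul_comm]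
  · rw [Finset.sum_comm]
    have hrw : ∀ y ∈ G.ball1 y₀, ∑ x ∈ G.ball1 x₀, ρ x y * h y
        = (∑ x ∈ G.ball1 x₀, ρ x y) * h y := by
      intro y _; rw [Finset.sum_mul]
    rw [Finset.sum_congr rfl hrw,
      show G.ball1 y₀ = letI := Classical.decEq V; insert y₀ (G.sph y₀) from rfl,
      Finset.sum_insert (G.not_mem_sph_self y₀), hh, mul_zero, zero_add]
    apply Finset.sum_congr rfl
    intro y hy
    have hadj : G.Adj y₀ y := G.mem_sph.mp hy
    have hd : G.d y₀ y = 1 := G.dist_eq_one_iff.mpr hadj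
    rw [← G.plan_col_sum hconn hρ y, hρ.2.2.2 y hd, mul_comm]

lemma weak_duality (hconn : G.toSimpleGraph.Connected) (hxy : x₀ ≠ y₀) (f : V → ℝ)
    (hf1 : ∀ a b, G.Adj a b → f a - f b ≤ 1)
    (hfn : f y₀ - f x₀ = (G.d x₀ y₀ : ℝ)) {ρ : V → V → ℝ}
    (hρ : G.IsTransportPlan x₀ y₀ ρ) :
    G.transportCost x₀ y₀ ρ ≤ (G.lap f x₀ - G.lap f y₀) / (G.d x₀ y₀ : ℝ) := by
  set n : ℝ := (G.d x₀ y₀ : ℝ) with hn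
  have hnpos : 0 < n := by
    have := hconn.pos_dist_of_ne hxy
    rw [hn]; exact_mod_cast this
  set g : V → ℝ := fun z => f z - f x₀ with hgdef
  set h : V → ℝ := fun z => f y₀ - f z with hhdef
  have hfyx : ∀ x y : V, f y - f x ≤ (G.d x y : ℝ) := by
    intro x y
    have := G.sub_le_dist hconn f hf1 y x
    rwa [show G.d y x = G.d x y from SimpleGraph.dist_comm] at this
  have key : ∀ x ∈ G.ball1 x₀, ∀ y ∈ G.ball1 y₀,
      ρ x y * (1 - (G.d x y : ℝ) / n) ≤ ρ x y * ((g x + h y) / n) := by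
    intro x _ y _
    apply mul_le_mul_of_nonneg_left _ (hρ.1 x y)
    have h1 : n - (G.d x y : ℝ) ≤ g x + h y := by
      have := hfyx x y
      simp only [hgdef, hhdef]
      linarith [hfn]
    have h2 : 1 - (G.d x y : ℝ) / n = (n - (G.d x y : ℝ)) / n := by
      field_simp
    rw [h2]
    exact div_le_div_of_nonneg_right h1 hnpos.le
  calc G.transportCost x₀ y₀ ρ
      = ∑ x ∈ G.ball1 x₀, ∑ y ∈ G.ball1 y₀,
          ρ x y * (1 - (G.d x y : ℝ) / n) := G.cost_eq_sum hconn hρ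
    _ ≤ ∑ x ∈ G.ball1 x₀, ∑ y ∈ G.ball1 y₀, ρ x y * ((g x + h y) / n) := by
        apply Finset.sum_le_sum
        intro x hx
        exact Finset.sum_le_sum (fun y hy => key x hx y hy)
    _ = (∑ x ∈ G.ball1 x₀, ∑ y ∈ G.ball1 y₀, ρ x y * (g x + h y)) / n := by
        rw [Finset.sum_div]
        refine Finset.sum_congr rfl (fun x _ => ?_)
        rw [Finset.sum_div]
        exact Finset.sum_congr rfl (fun y _ => (mul_div_assoc _ _ _).symm)
    _ = (∑ x ∈ G.sph x₀, G.q x₀ x * g x + ∑ y ∈ G.sph y₀, G.q y₀ y * h y) / n := by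
        rw [G.plan_pairing hconn hρ g h (by simp [hgdef]) (by simp [hhdef])]
    _ = (G.lap f x₀ - G.lap f y₀) / n := by
        congr 1
        have e1 : G.lap f x₀ = ∑ x ∈ G.sph x₀, G.q x₀ x * g x := G.lap_eq_sum_sph f x₀
        have e2 : G.lap f y₀ = -∑ y ∈ G.sph y₀, G.q y₀ y * h y := by
          rw [G.lap_eq_sum_sph f y₀, ← Finset.sum_neg_distrib]
          refine Finset.sum_congr rfl (fun y _ => ?_)
          simp only [hhdef]
          ring
        rw [e1, e2]
        ring

/-- The set appearing in the definition of `kappa`. -/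
def kappaSet (x₀ y₀ : V) : Set ℝ :=
  {r : ℝ | ∃ f : V → ℝ,
    (f y₀ - f x₀) / (G.d y₀ x₀ : ℝ) = 1 ∧ G.gradNorm f = 1 ∧
    r = (G.lap f x₀ - G.lap f y₀) / (G.d x₀ y₀ : ℝ)}

/-- The set of transport costs. -/
def costSet (x₀ y₀ : V) : Set ℝ :=
  {c : ℝ | ∃ ρ : V → V → ℝ, G.IsTransportPlan x₀ y₀ ρ ∧ c = G.transportCost x₀ y₀ ρ}

lemma kappa_eq_sInf (x₀ y₀ : V) : G.kappa x₀ y₀ = sInf (G.kappaSet x₀ y₀) := rfl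

/-- The trivial transport plan. -/
noncomputable def trivPlan (x₀ y₀ : V) : V → V → ℝ := fun u v =>
  letI := Classical.decEq V
  (if v = y₀ then G.q x₀ u else 0) + (if u = x₀ then G.q y₀ v else 0)

lemma trivPlan_isPlan : G.IsTransportPlan x₀ y₀ (G.trivPlan x₀ y₀) := by
  classical
  refine ⟨?_, ?_, ?_, ?_⟩
  · intro u v
    apply add_nonneg
    · by_cases h : v = y₀ <;> simp [trivPlan, h] <;> exact G.q_nonneg' _ _
    · by_cases h : u = x₀ <;> simp [trivPlan, h] <;> exact G.q_nonneg' _ _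
  · intro u v h
    constructor
    · by_cases hu : u = x₀
      · subst hu; simp [d, SimpleGraph.dist_self]
      · have hq : G.q x₀ u ≠ 0 := by
          intro h0; apply h; simp [trivPlan, h0, hu]
        have := G.dist_eq_one_iff.mpr (G.adj_of_q_ne_zero hq)
        omega
    · by_cases hv : v = y₀
      · subst hv; simp [d, SimpleGraph.dist_self]
      · have hq : G.q y₀ v ≠ 0 := by
          intro h0; apply h; simp [trivPlan, h0, hv]
        have := G.dist_eq_one_iff.mpr (G.adj_of_q_ne_zero hq)
        omega
  · intro x hx
    have hxne : x ≠ x₀ := by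
      intro h; rw [h] at hx; simp [d, SimpleGraph.dist_self] at hx
    have hcongr : ∀ v, G.trivPlan x₀ y₀ x v = if v = y₀ then G.q x₀ x else 0 := by
      intro v; simp [trivPlan, hxne]
    rw [finsum_congr hcongr, finsum_eq_single _ y₀ (fun v hv => by simp [hv])]
    simp
  · intro y hy
    have hyne : y ≠ y₀ := by
      intro h; rw [h] at hy; simp [d, SimpleGraph.dist_self] at hy
    have hcongr : ∀ u, G.trivPlan x₀ y₀ u y = if u = x₀ then G.q y₀ y else 0 := by
      intro u; simp [trivPlan, hyne]
    rw [finsum_congr hcongr, finsum_eq_single _ x₀ (fun u hu => by simp [hu])]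
    simp

lemma costSet_nonempty : (G.costSet x₀ y₀).Nonempty :=
  ⟨G.transportCost x₀ y₀ (G.trivPlan x₀ y₀), G.trivPlan x₀ y₀, G.trivPlan_isPlan, rfl⟩

lemma mem_kappaSet_of (hconn : G.toSimpleGraph.Connected) (hxy : x₀ ≠ y₀) (f : V → ℝ)
    (hf1 : ∀ a b, G.Adj a b → f a - f b ≤ 1)
    (hfn : f y₀ - f x₀ = (G.d x₀ y₀ : ℝ)) :
    (G.lap f x₀ - G.lap f y₀) / (G.d x₀ y₀ : ℝ) ∈ G.kappaSet x₀ y₀ := by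
  have hcomm : G.d y₀ x₀ = G.d x₀ y₀ := SimpleGraph.dist_comm
  have hnpos : (0:ℝ) < (G.d x₀ y₀ : ℝ) := by exact_mod_cast hconn.pos_dist_of_ne hxy
  refine ⟨f, ?_, ?_, rfl⟩
  · rw [hcomm, hfn]
    exact div_self hnpos.ne'
  · apply G.gradNorm_eq_one f hf1
    apply G.exists_edge_eq_one hconn f hf1 (hxy.symm)
    rw [hcomm]
    exact hfn

lemma of_mem_kappaSet (hconn : G.toSimpleGraph.Connected) (hxy : x₀ ≠ y₀) {r : ℝ}
    (hr : r ∈ G.kappaSet x₀ y₀) :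
    ∃ f : V → ℝ, (∀ a b, G.Adj a b → f a - f b ≤ 1) ∧
      f y₀ - f x₀ = (G.d x₀ y₀ : ℝ) ∧
      r = (G.lap f x₀ - G.lap f y₀) / (G.d x₀ y₀ : ℝ) := by
  obtain ⟨f, h1, h2, h3⟩ := hr
  have hcomm : G.d y₀ x₀ = G.d x₀ y₀ := SimpleGraph.dist_comm
  have hnpos : (0:ℝ) < (G.d x₀ y₀ : ℝ) := by exact_mod_cast hconn.pos_dist_of_ne hxy
  refine ⟨f, G.edge_le_of_gradNorm f h2, ?_, h3⟩
  rw [hcomm] at h1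
  field_simp at h1
  linarith [h1]

lemma weak_duality' (hconn : G.toSimpleGraph.Connected) (hxy : x₀ ≠ y₀) {r c : ℝ}
    (hr : r ∈ G.kappaSet x₀ y₀) (hc : c ∈ G.costSet x₀ y₀) : c ≤ r := by
  obtain ⟨f, hf1, hfn, hrf⟩ := G.of_mem_kappaSet hconn hxy hr
  obtain ⟨ρ, hρ, hcρ⟩ := hc
  rw [hrf, hcρ]
  exact G.weak_duality hconn hxy f hf1 hfn hρ

lemma kappaSet_nonempty (hconn : G.toSimpleGraph.Connected) (hxy : x₀ ≠ y₀) :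
    (G.kappaSet x₀ y₀).Nonempty := by
  set f₀ : V → ℝ := fun z => (G.d x₀ z : ℝ) with hf₀
  have hf1 : ∀ a b, G.Adj a b → f₀ a - f₀ b ≤ 1 := by
    intro a b hab
    have htri : G.d x₀ a ≤ G.d x₀ b + G.d b a := hconn.dist_triangle
    have hba : G.d b a = 1 := G.dist_eq_one_iff.mpr (by
      unfold Adj at *; rw [G.w_symm b a]; exact hab)
    rw [hba] at htri
    simp only [hf₀]
    have : (G.d x₀ a : ℝ) ≤ (G.d x₀ b : ℝ) + 1 := by exact_mod_cast htri
    linarith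
  have hfn : f₀ y₀ - f₀ x₀ = (G.d x₀ y₀ : ℝ) := by
    simp only [hf₀]
    rw [show G.d x₀ x₀ = 0 from SimpleGraph.dist_self]
    simp
  exact ⟨_, G.mem_kappaSet_of hconn hxy f₀ hf1 hfn⟩

set_option maxHeartbeats 1000000 in
lemma strong_duality (hconn : G.toSimpleGraph.Connected) (hxy : x₀ ≠ y₀)
    {ε : ℝ} (hε : 0 < ε) :
    ∃ r ∈ G.kappaSet x₀ y₀, r ≤ sSup (G.costSet x₀ y₀) + ε := by
  classical
  -- basic quantities
  set n : ℝ := (G.d x₀ y₀ : ℝ) with hn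
  have hnpos : (0:ℝ) < n := by rw [hn]; exact_mod_cast hconn.pos_dist_of_ne hxy
  set S : ℝ := sSup (G.costSet x₀ y₀) with hS
  obtain ⟨r₀, hr₀⟩ := G.kappaSet_nonempty hconn hxy
  have hTbdd : BddAbove (G.costSet x₀ y₀) :=
    ⟨r₀, fun c hc => G.weak_duality' hconn hxy hr₀ hc⟩
  have hcle : ∀ c ∈ G.costSet x₀ y₀, c ≤ S := fun c hc => le_csSup hTbdd hc
  have hd_self : ∀ z : V, G.d z z = 0 := fun z => SimpleGraph.dist_self
  -- index types for the finite linear program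
  set Bx : Finset V := G.ball1 x₀ with hBx
  set By : Finset V := G.ball1 y₀ with hBy
  have hx₀ : x₀ ∈ Bx := by rw [hBx, G.mem_ball1]; exact Or.inl rfl
  have hy₀ : y₀ ∈ By := by rw [hBy, G.mem_ball1]; exact Or.inl rfl
  set xS : ↥Bx := ⟨x₀, hx₀⟩ with hxS
  set yS : ↥By := ⟨y₀, hy₀⟩ with hyS
  have hmemBx : ∀ {z : V}, G.Adj x₀ z → z ∈ Bx := by
    intro z hz; rw [hBx, G.mem_ball1]; exact Or.inr hz
  have hmemBy : ∀ {z : V}, G.Adj y₀ z → z ∈ By := by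
    intro z hz; rw [hBy, G.mem_ball1]; exact Or.inr hz
  -- the cost coefficients
  set cst : V → V → ℝ := fun u w => 1 - (G.d u w : ℝ) / n with hcst
  have hncst : ∀ u w : V, n * cst u w = n - (G.d u w : ℝ) := by
    intro u w; rw [hcst]; field_simp
  -- the constraint matrix and right-hand side
  set N : Matrix (↥Bx ⊕ ↥By ⊕ Unit) (↥Bx × ↥By) ℝ := fun k i =>
    match k with
    | Sum.inl x => if x = xS then (if i = (xS, yS) then 1 else 0)
        else (if i.1 = x then 1 else 0)
    | Sum.inr (Sum.inl w) => if w = yS then (if i = (xS, yS) then 1 else 0)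
        else (if i.2 = w then 1 else 0)
    | Sum.inr (Sum.inr _) => cst i.1.1 i.2.1 with hNdef
  set b : (↥Bx ⊕ ↥By ⊕ Unit) → ℝ := fun k =>
    match k with
    | Sum.inl x => if x = xS then 0 else G.q x₀ x.1
    | Sum.inr (Sum.inl w) => if w = yS then 0 else G.q y₀ w.1
    | Sum.inr (Sum.inr _) => S + ε with hbdef
  have hNrow : ∀ (x : ↥Bx) (i : ↥Bx × ↥By), N (Sum.inl x) i =
      if x = xS then (if i = (xS, yS) then 1 else 0) else (if i.1 = x then 1 else 0) :=
    fun x i => rfl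
  have hNcol : ∀ (w : ↥By) (i : ↥Bx × ↥By), N (Sum.inr (Sum.inl w)) i =
      if w = yS then (if i = (xS, yS) then 1 else 0) else (if i.2 = w then 1 else 0) :=
    fun w i => rfl
  have hNcost : ∀ (i : ↥Bx × ↥By), N (Sum.inr (Sum.inr ())) i = cst i.1.1 i.2.1 :=
    fun i => rfl
  have hbrow : ∀ x : ↥Bx, b (Sum.inl x) = if x = xS then 0 else G.q x₀ x.1 := fun x => rfl
  have hbcol : ∀ w : ↥By, b (Sum.inr (Sum.inl w)) = if w = yS then 0 else G.q y₀ w.1 :=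
    fun w => rfl
  have hbcost : b (Sum.inr (Sum.inr ())) = S + ε := rfl
  -- indicator sum collapses
  have hcollapse_ind : ∀ v : ↥Bx × ↥By → ℝ,
      ∑ i : ↥Bx × ↥By, (if i = (xS, yS) then 1 else 0) * v i = v (xS, yS) := by
    intro v
    rw [Finset.sum_congr rfl (fun i (_ : i ∈ Finset.univ) => by
      by_cases h : i = (xS, yS) <;> simp [h] :
      ∀ i ∈ Finset.univ, (if i = (xS, yS) then 1 else 0) * v i
        = if i = (xS, yS) then v i else 0)]
    simp
  have hcollapse_row : ∀ (x : ↥Bx) (v : ↥Bx × ↥By → ℝ),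
      ∑ i : ↥Bx × ↥By, (if i.1 = x then 1 else 0) * v i = ∑ w : ↥By, v (x, w) := by
    intro x v
    rw [Fintype.sum_prod_type]
    rw [show (∑ a : ↥Bx, ∑ w : ↥By, (if ((a, w) : ↥Bx × ↥By).1 = x then 1 else 0) * v (a, w))
        = ∑ a : ↥Bx, (if a = x then ∑ w : ↥By, v (a, w) else 0) from
      Finset.sum_congr rfl (fun a _ => by
        by_cases h : a = x <;> simp [h])]
    simp
  have hcollapse_col : ∀ (w : ↥By) (v : ↥Bx × ↥By → ℝ),
      ∑ i : ↥Bx × ↥By, (if i.2 = w then 1 else 0) * v i = ∑ x : ↥Bx, v (x, w) := by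
    intro w v
    rw [Fintype.sum_prod_type]
    refine Finset.sum_congr rfl (fun a _ => ?_)
    rw [show (∑ u : ↥By, (if ((a, u) : ↥Bx × ↥By).2 = w then 1 else 0) * v (a, u))
        = ∑ u : ↥By, (if u = w then v (a, u) else 0) from
      Finset.sum_congr rfl (fun u _ => by by_cases h : u = w <;> simp [h])]
    simp
  -- translating double sums over the index type to sums over the balls
  have hdouble : ∀ f : V → V → ℝ,
      ∑ i : ↥Bx × ↥By, f i.1.1 i.2.1 = ∑ u ∈ Bx, ∑ w ∈ By, f u w := by
    intro f
    rw [Fintype.sum_prod_type]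
    rw [show (∑ a : ↥Bx, ∑ w : ↥By, f (((a, w) : ↥Bx × ↥By)).1.1 (((a, w) : ↥Bx × ↥By)).2.1)
        = ∑ a : ↥Bx, ∑ w ∈ By, f a.1 w from
      Finset.sum_congr rfl (fun a _ => Finset.sum_coe_sort By (fun w => f a.1 w))]
    exact Finset.sum_coe_sort Bx (fun u => ∑ w ∈ By, f u w)
  -- the row condition needed for closedness of the image of the orthant
  have hrowcond : ∀ i : ↥Bx × ↥By, ∃ k, N k i = 1 ∧ ∀ i', 0 ≤ N k i' := by
    rintro ⟨xs, ws⟩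
    by_cases hxs : xs = xS
    · by_cases hws : ws = yS
      · refine ⟨Sum.inl xS, ?_, ?_⟩
        · rw [hNrow, if_pos rfl, if_pos (by rw [hxs, hws])]
        · intro i'; rw [hNrow, if_pos rfl]; split <;> norm_num
      · refine ⟨Sum.inr (Sum.inl ws), ?_, ?_⟩
        · rw [hNcol, if_neg hws, if_pos rfl]
        · intro i'; rw [hNcol, if_neg hws]; split <;> norm_num
    · refine ⟨Sum.inl xs, ?_, ?_⟩
      · rw [hNrow, if_neg hxs, if_pos rfl]
      · intro i'; rw [hNrow, if_neg hxs]; split <;> norm_num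
  -- apply the Farkas alternative
  rcases lp_farkas_alternative N b hrowcond with ⟨v, hv0, hvk⟩ | ⟨y, hA, hyb⟩
  · -- first case: an exact transport plan with cost `S + ε`; contradiction
    exfalso
    set ρ : V → V → ℝ := fun u w =>
      if hu : u ∈ Bx then if hw : w ∈ By then v (⟨u, hu⟩, ⟨w, hw⟩) else 0 else 0 with hρdef
    have hρval : ∀ (xs : ↥Bx) (ws : ↥By), ρ xs.1 ws.1 = v (xs, ws) := by
      intro xs ws
      rw [hρdef]
      simp only [xs.2, ws.2, dif_pos, Subtype.coe_eta]
    have hρ0 : ∀ u w, 0 ≤ ρ u w := by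
      intro u w
      rw [hρdef]
      dsimp only
      split
      · split
        · exact hv0 _
        · exact le_refl 0
      · exact le_refl 0
    have hρsupp : ∀ u w, ρ u w ≠ 0 → u ∈ Bx ∧ w ∈ By := by
      intro u w hne
      rw [hρdef] at hne
      dsimp only at hne
      constructor
      · by_contra hc; rw [dif_neg hc] at hne; exact hne rfl
      · by_contra hc
        rcases em (u ∈ Bx) with hu | hu
        · rw [dif_pos hu, dif_neg hc] at hne; exact hne rfl
        · rw [dif_neg hu] at hne; exact hne rfl
    have hrowmarg : ∀ x : V, G.d x₀ x = 1 → ∑ᶠ w, ρ x w = G.q x₀ x := by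
      intro x hx
      have hadj : G.Adj x₀ x := G.dist_eq_one_iff.mp hx
      have hxB : x ∈ Bx := hmemBx hadj
      have hxne : (⟨x, hxB⟩ : ↥Bx) ≠ xS := by
        intro hc
        apply G.not_adj_self x₀
        have hveq : x = x₀ := congrArg Subtype.val hc
        rwa [hveq] at hadj
      have h1 : ∑ᶠ w, ρ x w = ∑ w ∈ By, ρ x w := by
        apply finsum_eq_sum_of_support_subset
        intro w hw
        simp only [Function.mem_support] at hw
        exact (hρsupp x w hw).2
      have h2 : ∑ w ∈ By, ρ x w = ∑ ws : ↥By, v (⟨x, hxB⟩, ws) := by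
        rw [← Finset.sum_coe_sort By (fun w => ρ x w)]
        exact Finset.sum_congr rfl (fun ws _ => hρval ⟨x, hxB⟩ ws)
      have h3 : ∑ i : ↥Bx × ↥By, (if i.1 = (⟨x, hxB⟩ : ↥Bx) then 1 else 0) * v i
          = b (Sum.inl ⟨x, hxB⟩) := by
        rw [← hvk (Sum.inl ⟨x, hxB⟩)]
        exact Finset.sum_congr rfl (fun i _ => by rw [hNrow, if_neg hxne])
      rw [hcollapse_row] at h3
      rw [h1, h2, h3, hbrow, if_neg hxne]
    have hcolmarg : ∀ w : V, G.d y₀ w = 1 → ∑ᶠ u, ρ u w = G.q y₀ w := by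
      intro w hw
      have hadj : G.Adj y₀ w := G.dist_eq_one_iff.mp hw
      have hwB : w ∈ By := hmemBy hadj
      have hwne : (⟨w, hwB⟩ : ↥By) ≠ yS := by
        intro hc
        apply G.not_adj_self y₀
        have hveq : w = y₀ := congrArg Subtype.val hc
        rwa [hveq] at hadj
      have h1 : ∑ᶠ u, ρ u w = ∑ u ∈ Bx, ρ u w := by
        apply finsum_eq_sum_of_support_subset
        intro u hu
        simp only [Function.mem_support] at hu
        exact (hρsupp u w hu).1
      have h2 : ∑ u ∈ Bx, ρ u w = ∑ xs : ↥Bx, v (xs, ⟨w, hwB⟩) := by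
        rw [← Finset.sum_coe_sort Bx (fun u => ρ u w)]
        exact Finset.sum_congr rfl (fun xs _ => hρval xs ⟨w, hwB⟩)
      have h3 : ∑ i : ↥Bx × ↥By, (if i.2 = (⟨w, hwB⟩ : ↥By) then 1 else 0) * v i
          = b (Sum.inr (Sum.inl ⟨w, hwB⟩)) := by
        rw [← hvk (Sum.inr (Sum.inl ⟨w, hwB⟩))]
        exact Finset.sum_congr rfl (fun i _ => by rw [hNcol, if_neg hwne])
      rw [hcollapse_col] at h3
      rw [h1, h2, h3, hbcol, if_neg hwne]
    have hplan : G.IsTransportPlan x₀ y₀ ρ := by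
      refine ⟨hρ0, ?_, hrowmarg, hcolmarg⟩
      intro u w hne
      obtain ⟨hu, hw⟩ := hρsupp u w hne
      constructor
      · exact (G.mem_ball1_iff_dist hconn).mp (by rw [← hBx]; exact hu)
      · exact (G.mem_ball1_iff_dist hconn).mp (by rw [← hBy]; exact hw)
    have hcost : G.transportCost x₀ y₀ ρ = S + ε := by
      have h4 : ∑ i : ↥Bx × ↥By, N (Sum.inr (Sum.inr ())) i * v i = S + ε := by
        rw [hvk (Sum.inr (Sum.inr ())), hbcost]
      have h5 : ∑ i : ↥Bx × ↥By, N (Sum.inr (Sum.inr ())) i * v i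
          = ∑ i : ↥Bx × ↥By, ρ i.1.1 i.2.1 * cst i.1.1 i.2.1 := by
        refine Finset.sum_congr rfl (fun i _ => ?_)
        rw [hNcost]
        have h6 : ρ i.1.1 i.2.1 = v i :=
          (hρval i.1 i.2).trans (congrArg v Prod.mk.eta)
        rw [h6]
        ring
      have h7 : ∑ i : ↥Bx × ↥By, ρ i.1.1 i.2.1 * cst i.1.1 i.2.1
          = ∑ u ∈ Bx, ∑ w ∈ By, ρ u w * cst u w := hdouble (fun u w => ρ u w * cst u w)
      have h8 : G.transportCost x₀ y₀ ρ = ∑ u ∈ Bx, ∑ w ∈ By, ρ u w * cst u w := by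
        rw [G.cost_eq_sum hconn hplan, ← hBx, ← hBy]
      rw [h8, ← h7, h5.symm.trans h4]
    have hmem : S + ε ∈ G.costSet x₀ y₀ := ⟨ρ, hplan, hcost.symm⟩
    have := hcle _ hmem
    linarith
  · -- second case: a separating dual vector gives a near-optimal Lipschitz function
    set t : ℝ := y (Sum.inr (Sum.inr ())) with ht
    set uR : ↥Bx → ℝ := fun x => y (Sum.inl x) with huR
    set uC : ↥By → ℝ := fun w => y (Sum.inr (Sum.inl w)) with huC
    -- decompose sums over the constraint index type
    have hsum_k : ∀ F : (↥Bx ⊕ ↥By ⊕ Unit) → ℝ,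
        ∑ k, F k = (∑ x : ↥Bx, F (Sum.inl x)) + ((∑ w : ↥By, F (Sum.inr (Sum.inl w)))
          + F (Sum.inr (Sum.inr ()))) := by
      intro F
      rw [Fintype.sum_sum_type]
      congr 1
      rw [Fintype.sum_sum_type]
      congr 1
      exact Fintype.sum_unique _
    have hFullRow : ∀ i : ↥Bx × ↥By, ∑ x : ↥Bx, N (Sum.inl x) i * uR x
        = (if i = (xS, yS) then 1 else 0) * uR xS
          + (if i.1 = xS then 0 else uR i.1) := by
      intro i
      rw [← Finset.add_sum_erase Finset.univ _ (Finset.mem_univ xS)]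
      congr 1
      · rw [hNrow, if_pos rfl]
      · have hcongr : ∑ x ∈ Finset.univ.erase xS, N (Sum.inl x) i * uR x
            = ∑ x ∈ Finset.univ.erase xS, (if i.1 = x then uR x else 0) := by
          refine Finset.sum_congr rfl (fun x hx => ?_)
          rw [hNrow, if_neg (Finset.ne_of_mem_erase hx)]
          by_cases h : i.1 = x <;> simp [h]
        rw [hcongr, Finset.sum_ite_eq]
        by_cases h : i.1 = xS <;> simp [h, Finset.mem_erase]
    have hFullCol : ∀ i : ↥Bx × ↥By, ∑ w : ↥By, N (Sum.inr (Sum.inl w)) i * uC w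
        = (if i = (xS, yS) then 1 else 0) * uC yS
          + (if i.2 = yS then 0 else uC i.2) := by
      intro i
      rw [← Finset.add_sum_erase Finset.univ _ (Finset.mem_univ yS)]
      congr 1
      · rw [hNcol, if_pos rfl]
      · have hcongr : ∑ w ∈ Finset.univ.erase yS, N (Sum.inr (Sum.inl w)) i * uC w
            = ∑ w ∈ Finset.univ.erase yS, (if i.2 = w then uC w else 0) := by
          refine Finset.sum_congr rfl (fun w hw => ?_)
          rw [hNcol, if_neg (Finset.ne_of_mem_erase hw)]
          by_cases h : i.2 = w <;> simp [h]
        rw [hcongr, Finset.sum_ite_eq]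
        by_cases h : i.2 = yS <;> simp [h, Finset.mem_erase]
    have hFull : ∀ i : ↥Bx × ↥By, ∑ k, N k i * y k
        = ((if i = (xS, yS) then 1 else 0) * uR xS + (if i.1 = xS then 0 else uR i.1))
          + (((if i = (xS, yS) then 1 else 0) * uC yS + (if i.2 = yS then 0 else uC i.2))
          + t * cst i.1.1 i.2.1) := by
      intro i
      rw [hsum_k (fun k => N k i * y k)]
      congr 1
      · exact hFullRow i
      congr 1
      · exact hFullCol i
      · rw [hNcost]; ring
    -- the t coefficient is negative
    have htriv : G.IsTransportPlan x₀ y₀ (G.trivPlan x₀ y₀) := G.trivPlan_isPlan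
    set Cbar : ℝ := G.transportCost x₀ y₀ (G.trivPlan x₀ y₀) with hCbar
    have hCbar_le : Cbar ≤ S := hcle _ ⟨G.trivPlan x₀ y₀, htriv, rfl⟩
    set vbar : ↥Bx × ↥By → ℝ := fun i => G.trivPlan x₀ y₀ i.1.1 i.2.1 with hvbar
    have hvbar0 : ∀ i, 0 ≤ vbar i := fun i => htriv.1 _ _
    have hq_self : ∀ z : V, G.q z z = 0 := by
      intro z; rw [WeightedGraph.q, G.w_diag]; exact zero_div _
    have htriv_x₀y₀ : G.trivPlan x₀ y₀ x₀ y₀ = 0 := by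
      rw [WeightedGraph.trivPlan]
      simp [hq_self]
    have htriv_row : ∀ xs : ↥Bx, xs ≠ xS →
        ∀ w : V, G.trivPlan x₀ y₀ xs.1 w = if w = y₀ then G.q x₀ xs.1 else 0 := by
      intro xs hxs w
      have hne : xs.1 ≠ x₀ := fun hc => hxs (Subtype.ext hc)
      rw [WeightedGraph.trivPlan]
      simp [hne]
    have htriv_col : ∀ ws : ↥By, ws ≠ yS →
        ∀ u : V, G.trivPlan x₀ y₀ u ws.1 = if u = x₀ then G.q y₀ ws.1 else 0 := by
      intro ws hws u
      have hne : ws.1 ≠ y₀ := fun hc => hws (Subtype.ext hc)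
      rw [WeightedGraph.trivPlan]
      simp [hne]
    have hbar_row : ∀ x : ↥Bx, ∑ i : ↥Bx × ↥By, N (Sum.inl x) i * vbar i = b (Sum.inl x) := by
      intro x
      by_cases hx : x = xS
      · subst hx
        have hcongr : ∑ i : ↥Bx × ↥By, N (Sum.inl xS) i * vbar i
            = ∑ i : ↥Bx × ↥By, (if i = (xS, yS) then 1 else 0) * vbar i :=
          Finset.sum_congr rfl (fun i _ => by rw [hNrow, if_pos rfl])
        rw [hcongr, hcollapse_ind, hbrow, if_pos rfl, hvbar]
        exact htriv_x₀y₀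
      · have hcongr : ∑ i : ↥Bx × ↥By, N (Sum.inl x) i * vbar i
            = ∑ i : ↥Bx × ↥By, (if i.1 = x then 1 else 0) * vbar i :=
          Finset.sum_congr rfl (fun i _ => by rw [hNrow, if_neg hx])
        rw [hcongr, hcollapse_row, hbrow, if_neg hx]
        have hcongr2 : ∀ w : ↥By, vbar (x, w) = if w = yS then G.q x₀ x.1 else 0 := by
          intro w
          rw [hvbar]
          dsimp only
          rw [htriv_row x hx w.1]
          by_cases hw : w = yS
          · rw [if_pos (congrArg Subtype.val hw), if_pos hw]
          · rw [if_neg (fun hc => hw (Subtype.ext hc)), if_neg hw]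
        rw [Finset.sum_congr rfl (fun w _ => hcongr2 w)]
        simp
    have hbar_col : ∀ w : ↥By, ∑ i : ↥Bx × ↥By, N (Sum.inr (Sum.inl w)) i * vbar i
        = b (Sum.inr (Sum.inl w)) := by
      intro w
      by_cases hw : w = yS
      · subst hw
        have hcongr : ∑ i : ↥Bx × ↥By, N (Sum.inr (Sum.inl yS)) i * vbar i
            = ∑ i : ↥Bx × ↥By, (if i = (xS, yS) then 1 else 0) * vbar i :=
          Finset.sum_congr rfl (fun i _ => by rw [hNcol, if_pos rfl])
        rw [hcongr, hcollapse_ind, hbcol, if_pos rfl, hvbar]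
        exact htriv_x₀y₀
      · have hcongr : ∑ i : ↥Bx × ↥By, N (Sum.inr (Sum.inl w)) i * vbar i
            = ∑ i : ↥Bx × ↥By, (if i.2 = w then 1 else 0) * vbar i :=
          Finset.sum_congr rfl (fun i _ => by rw [hNcol, if_neg hw])
        rw [hcongr, hcollapse_col, hbcol, if_neg hw]
        have hcongr2 : ∀ x : ↥Bx, vbar (x, w) = if x = xS then G.q y₀ w.1 else 0 := by
          intro x
          rw [hvbar]
          dsimp only
          rw [htriv_col w hw x.1]
          by_cases hx : x = xS
          · rw [if_pos (congrArg Subtype.val hx), if_pos hx]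
          · rw [if_neg (fun hc => hx (Subtype.ext hc)), if_neg hx]
        rw [Finset.sum_congr rfl (fun x _ => hcongr2 x)]
        simp
    have hbar_cost : ∑ i : ↥Bx × ↥By, N (Sum.inr (Sum.inr ())) i * vbar i = Cbar := by
      have h5 : ∑ i : ↥Bx × ↥By, N (Sum.inr (Sum.inr ())) i * vbar i
          = ∑ i : ↥Bx × ↥By, G.trivPlan x₀ y₀ i.1.1 i.2.1 * cst i.1.1 i.2.1 := by
        refine Finset.sum_congr rfl (fun i _ => ?_)
        rw [hNcost]
        have h6 : vbar i = G.trivPlan x₀ y₀ i.1.1 i.2.1 := rfl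
        rw [h6]
        ring
      have h7 : ∑ i : ↥Bx × ↥By, G.trivPlan x₀ y₀ i.1.1 i.2.1 * cst i.1.1 i.2.1
          = ∑ u ∈ Bx, ∑ w ∈ By, G.trivPlan x₀ y₀ u w * cst u w :=
        hdouble (fun u w => G.trivPlan x₀ y₀ u w * cst u w)
      have h8 : Cbar = ∑ u ∈ Bx, ∑ w ∈ By, G.trivPlan x₀ y₀ u w * cst u w := by
        rw [hCbar, G.cost_eq_sum hconn htriv, ← hBx, ← hBy]
      rw [h5, h7, ← h8]
    -- nonnegativity of the pairing with the trivial plan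
    have hswap : 0 ≤ ∑ k, (∑ i : ↥Bx × ↥By, N k i * vbar i) * y k := by
      have h1 : (0:ℝ) ≤ ∑ i : ↥Bx × ↥By, (∑ k, N k i * y k) * vbar i :=
        Finset.sum_nonneg (fun i _ => mul_nonneg (hA i) (hvbar0 i))
      have h2 : ∑ i : ↥Bx × ↥By, (∑ k, N k i * y k) * vbar i
          = ∑ k, (∑ i : ↥Bx × ↥By, N k i * vbar i) * y k := by
        calc ∑ i : ↥Bx × ↥By, (∑ k, N k i * y k) * vbar i
            = ∑ i : ↥Bx × ↥By, ∑ k, N k i * y k * vbar i :=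
              Finset.sum_congr rfl (fun i _ => Finset.sum_mul _ _ _)
          _ = ∑ k, ∑ i : ↥Bx × ↥By, N k i * y k * vbar i := Finset.sum_comm
          _ = ∑ k, (∑ i : ↥Bx × ↥By, N k i * vbar i) * y k := by
              refine Finset.sum_congr rfl (fun k _ => ?_)
              rw [Finset.sum_mul]
              exact Finset.sum_congr rfl (fun i _ => by ring)
      linarith [h1, h2.symm.le, h2.le]
    have hQsum : ∀ cz : ℝ, ∑ k, (fun k => if k = Sum.inr (Sum.inr ()) then cz else b k) k * y k
        = (∑ x : ↥Bx, b (Sum.inl x) * uR x) + ((∑ w : ↥By, b (Sum.inr (Sum.inl w)) * uC w)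
          + cz * t) := by
      intro cz
      rw [hsum_k (fun k => (if k = Sum.inr (Sum.inr ()) then cz else b k) * y k)]
      refine congrArg₂ (· + ·) ?_ (congrArg₂ (· + ·) ?_ ?_)
      · exact Finset.sum_congr rfl (fun x _ => by rw [if_neg (by simp)])
      · exact Finset.sum_congr rfl (fun w _ => by rw [if_neg (by simp)])
      · rw [if_pos rfl]
    set Q : ℝ := (∑ x : ↥Bx, b (Sum.inl x) * uR x)
      + (∑ w : ↥By, b (Sum.inr (Sum.inl w)) * uC w) with hQ
    have hswap' : 0 ≤ Q + Cbar * t := by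
      have h3 : ∑ k, (∑ i : ↥Bx × ↥By, N k i * vbar i) * y k
          = ∑ k, (fun k => if k = Sum.inr (Sum.inr ()) then Cbar else b k) k * y k := by
        refine Finset.sum_congr rfl (fun k _ => ?_)
        congr 1
        dsimp only
        rcases k with x | w | ⟨⟩
        · rw [hbar_row, if_neg (by simp)]
        · rw [hbar_col, if_neg (by simp)]
        · rw [hbar_cost, if_pos rfl]
      rw [h3, hQsum Cbar] at hswap
      rw [hQ]
      linarith
    have hyb' : Q + (S + ε) * t < 0 := by
      have h3 : ∑ k, y k * b k
          = ∑ k, (fun k => if k = Sum.inr (Sum.inr ()) then S + ε else b k) k * y k := by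
        refine Finset.sum_congr rfl (fun k _ => ?_)
        rw [mul_comm]
        congr 1
        dsimp only
        rcases k with x | w | ⟨⟩
        · rw [if_neg (by simp)]
        · rw [if_neg (by simp)]
        · rw [hbcost, if_pos rfl]
      rw [h3, hQsum (S + ε)] at hyb
      rw [hQ]
      linarith
    have ht_neg : t < 0 := by
      have h4 : t * ((S + ε) - Cbar) < 0 := by nlinarith [hyb', hswap']
      have h5 : 0 < (S + ε) - Cbar := by linarith
      nlinarith [h4, h5]
    set lam : ℝ := -1 / t with hlam_def
    have hlam : 0 < lam := by
      rw [hlam_def]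
      exact div_pos_of_neg_of_neg (by norm_num) ht_neg
    have hlamt : lam * t = -1 := by
      rw [hlam_def]
      exact div_mul_cancel₀ (-1) ht_neg.ne
    -- the dual potentials
    set g : V → ℝ := fun z =>
      if hz : z ∈ Bx then (if z = x₀ then 0 else n * lam * uR ⟨z, hz⟩) else 0 with hgdef
    set h : V → ℝ := fun z =>
      if hz : z ∈ By then (if z = y₀ then 0 else n * lam * uC ⟨z, hz⟩) else 0 with hhdef
    have hgx₀ : g x₀ = 0 := by rw [hgdef]; simp [hx₀]
    have hhy₀ : h y₀ = 0 := by rw [hhdef]; simp [hy₀]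
    have hgval : ∀ x : ↥Bx, g x.1 = n * lam * (if x = xS then 0 else uR x) := by
      intro x
      rw [hgdef]
      dsimp only
      rw [dif_pos x.2]
      by_cases hx : x = xS
      · rw [if_pos (congrArg Subtype.val hx), if_pos hx, mul_zero]
      · rw [if_neg (fun hc => hx (Subtype.ext hc)), if_neg hx, Subtype.coe_eta]
    have hhval : ∀ w : ↥By, h w.1 = n * lam * (if w = yS then 0 else uC w) := by
      intro w
      rw [hhdef]
      dsimp only
      rw [dif_pos w.2]
      by_cases hw : w = yS
      · rw [if_pos (congrArg Subtype.val hw), if_pos hw, mul_zero]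
      · rw [if_neg (fun hc => hw (Subtype.ext hc)), if_neg hw, Subtype.coe_eta]
    -- dual feasibility
    have hfeas : ∀ u ∈ Bx, ∀ w ∈ By, n - (G.d u w : ℝ) ≤ g u + h w := by
      intro u hu w hw
      by_cases hboth : u = x₀ ∧ w = y₀
      · obtain ⟨hu1, hw1⟩ := hboth
        subst hu1; subst hw1
        rw [hgx₀, hhy₀, ← hn]
        linarith
      · set xs : ↥Bx := ⟨u, hu⟩ with hxsdef
        set ws : ↥By := ⟨w, hw⟩ with hwsdef
        have hind : ((xs, ws) : ↥Bx × ↥By) ≠ (xS, yS) := by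
          intro hc
          apply hboth
          constructor
          · exact congrArg Subtype.val (congrArg Prod.fst hc)
          · exact congrArg Subtype.val (congrArg Prod.snd hc)
        have hi := hA (xs, ws)
        rw [hFull (xs, ws), if_neg hind] at hi
        set R : ℝ := (if xs = xS then 0 else uR xs) + (if ws = yS then 0 else uC ws) with hR
        have hi' : 0 ≤ R + t * cst u w := by
          rw [hR]
          simp only at hi
          linarith [hi]
        have hgu : g u = n * lam * (if xs = xS then 0 else uR xs) := hgval xs
        have hhw : h w = n * lam * (if ws = yS then 0 else uC ws) := hhval ws
        have e2 : 0 ≤ n * lam * (R + t * cst u w) :=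
          mul_nonneg (mul_nonneg hnpos.le hlam.le) hi'
        have e3 : n * lam * (t * cst u w) = -(n * cst u w) := by
          have : n * lam * (t * cst u w) = (lam * t) * (n * cst u w) := by ring
          rw [this, hlamt]
          ring
        have e4 : n * cst u w = n - (G.d u w : ℝ) := hncst u w
        have e5 : g u + h w = n * lam * R := by rw [hgu, hhw, hR]; ring
        linarith [e2, e3, e4, e5]
    -- the optimal Lipschitz potential
    set fstar : V → ℝ := fun z => Finset.inf' Bx ⟨x₀, hx₀⟩ (fun u => g u + (G.d u z : ℝ))
      with hfstar
    have hfs_le : ∀ u ∈ Bx, ∀ z : V, fstar z ≤ g u + (G.d u z : ℝ) := by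
      intro u hu z
      rw [hfstar]
      exact Finset.inf'_le _ hu
    have hfs_ge : ∀ (z : V) (c : ℝ), (∀ u ∈ Bx, c ≤ g u + (G.d u z : ℝ)) → c ≤ fstar z := by
      intro z c hc
      rw [hfstar]
      exact Finset.le_inf' _ _ hc
    have hny' : ∀ u ∈ Bx, n ≤ g u + (G.d u y₀ : ℝ) := by
      intro u hu
      have := hfeas u hu y₀ hy₀
      rw [hhy₀] at this
      linarith
    have hfsy₀ : fstar y₀ = n := by
      apply le_antisymm
      · have := hfs_le x₀ hx₀ y₀
        rw [hgx₀, ← hn] at this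
        linarith
      · exact hfs_ge y₀ n hny'
    have hfsx₀ : fstar x₀ = 0 := by
      apply le_antisymm
      · have := hfs_le x₀ hx₀ x₀
        rw [hgx₀, hd_self x₀] at this
        simpa using this
      · apply hfs_ge x₀ 0
        intro u hu
        have h1 := hny' u hu
        have h2 : (G.d u y₀ : ℝ) ≤ (G.d u x₀ : ℝ) + n := by
          rw [hn]
          exact_mod_cast hconn.dist_triangle (v := x₀)
        linarith
    have hfsLip : ∀ a c : V, G.Adj a c → fstar a - fstar c ≤ 1 := by
      intro a c hac
      obtain ⟨u, hu, hue⟩ := Finset.exists_mem_eq_inf' (⟨x₀, hx₀⟩ : Bx.Nonempty)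
        (fun u => g u + (G.d u c : ℝ))
      have h1 : fstar a ≤ g u + (G.d u a : ℝ) := hfs_le u hu a
      have h2 : G.d u a ≤ G.d u c + G.d c a := hconn.dist_triangle
      have h3 : G.d c a = 1 := G.dist_eq_one_iff.mpr (by
        unfold WeightedGraph.Adj at *; rw [G.w_symm c a]; exact hac)
      have h4 : fstar c = g u + (G.d u c : ℝ) := hue
      rw [h3] at h2
      have h5 : (G.d u a : ℝ) ≤ (G.d u c : ℝ) + 1 := by exact_mod_cast h2
      linarith
    have hfs_ub : ∀ u ∈ Bx, fstar u ≤ g u := by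
      intro u hu
      have := hfs_le u hu u
      rw [hd_self u] at this
      simpa using this
    have hfs_lb : ∀ w ∈ By, n - h w ≤ fstar w := by
      intro w hw
      apply hfs_ge
      intro u hu
      have := hfeas u hu w hw
      linarith
    -- assembling the final bound
    have hQx : ∑ z ∈ G.sph x₀, G.q x₀ z * g z
        = (n * lam) * ∑ x : ↥Bx, b (Sum.inl x) * uR x := by
      have step1 : ∑ x : ↥Bx, b (Sum.inl x) * uR x
          = ∑ z ∈ Bx, (fun z => if hz : z ∈ Bx then
              (if z = x₀ then 0 else G.q x₀ z * uR ⟨z, hz⟩) else 0) z := by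
        rw [← Finset.sum_coe_sort Bx _]
        refine Finset.sum_congr rfl (fun x _ => ?_)
        rw [dif_pos x.2]
        by_cases hx : x = xS
        · rw [if_pos (congrArg Subtype.val hx), hbrow, if_pos hx, zero_mul]
        · rw [if_neg (fun hc => hx (Subtype.ext hc)), Subtype.coe_eta, hbrow, if_neg hx]
      have herase : Bx.erase x₀ = G.sph x₀ := by
        ext z
        rw [Finset.mem_erase, hBx, G.mem_ball1]
        constructor
        · rintro ⟨hne, (rfl | hadj)⟩
          · exact absurd rfl hne
          · exact G.mem_sph.mpr hadj
        · intro hz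
          have hadj := G.mem_sph.mp hz
          exact ⟨fun hc => G.not_adj_self x₀ (hc ▸ hadj), Or.inr hadj⟩
      have step2 : ∑ z ∈ Bx, (fun z => if hz : z ∈ Bx then
            (if z = x₀ then 0 else G.q x₀ z * uR ⟨z, hz⟩) else 0) z
          = ∑ z ∈ G.sph x₀, (fun z => if hz : z ∈ Bx then
            (if z = x₀ then 0 else G.q x₀ z * uR ⟨z, hz⟩) else 0) z := by
        rw [← Finset.add_sum_erase Bx _ hx₀, herase, dif_pos hx₀, if_pos rfl, zero_add]
      rw [step1, step2, Finset.mul_sum]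
      refine Finset.sum_congr rfl (fun z hz => ?_)
      have hadj : G.Adj x₀ z := G.mem_sph.mp hz
      have hzB : z ∈ Bx := hmemBx hadj
      have hzne : z ≠ x₀ := by
        intro hc; rw [hc] at hadj; exact G.not_adj_self x₀ hadj
      rw [dif_pos hzB, if_neg hzne]
      have hgz : g z = n * lam * uR ⟨z, hzB⟩ := by
        have := hgval ⟨z, hzB⟩
        rw [if_neg (fun hc => hzne (congrArg Subtype.val hc))] at this
        exact this
      rw [hgz]
      ring
    have hQy : ∑ z ∈ G.sph y₀, G.q y₀ z * h z
        = (n * lam) * ∑ w : ↥By, b (Sum.inr (Sum.inl w)) * uC w := by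
      have step1 : ∑ w : ↥By, b (Sum.inr (Sum.inl w)) * uC w
          = ∑ z ∈ By, (fun z => if hz : z ∈ By then
              (if z = y₀ then 0 else G.q y₀ z * uC ⟨z, hz⟩) else 0) z := by
        rw [← Finset.sum_coe_sort By _]
        refine Finset.sum_congr rfl (fun w _ => ?_)
        rw [dif_pos w.2]
        by_cases hw : w = yS
        · rw [if_pos (congrArg Subtype.val hw), hbcol, if_pos hw, zero_mul]
        · rw [if_neg (fun hc => hw (Subtype.ext hc)), Subtype.coe_eta, hbcol, if_neg hw]
      have herase : By.erase y₀ = G.sph y₀ := by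
        ext z
        rw [Finset.mem_erase, hBy, G.mem_ball1]
        constructor
        · rintro ⟨hne, (rfl | hadj)⟩
          · exact absurd rfl hne
          · exact G.mem_sph.mpr hadj
        · intro hz
          have hadj := G.mem_sph.mp hz
          exact ⟨fun hc => G.not_adj_self y₀ (hc ▸ hadj), Or.inr hadj⟩
      have step2 : ∑ z ∈ By, (fun z => if hz : z ∈ By then
            (if z = y₀ then 0 else G.q y₀ z * uC ⟨z, hz⟩) else 0) z
          = ∑ z ∈ G.sph y₀, (fun z => if hz : z ∈ By then
            (if z = y₀ then 0 else G.q y₀ z * uC ⟨z, hz⟩) else 0) z := by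
        rw [← Finset.add_sum_erase By _ hy₀, herase, dif_pos hy₀, if_pos rfl, zero_add]
      rw [step1, step2, Finset.mul_sum]
      refine Finset.sum_congr rfl (fun z hz => ?_)
      have hadj : G.Adj y₀ z := G.mem_sph.mp hz
      have hzB : z ∈ By := hmemBy hadj
      have hzne : z ≠ y₀ := by
        intro hc; rw [hc] at hadj; exact G.not_adj_self y₀ hadj
      rw [dif_pos hzB, if_neg hzne]
      have hhz : h z = n * lam * uC ⟨z, hzB⟩ := by
        have := hhval ⟨z, hzB⟩
        rw [if_neg (fun hc => hzne (congrArg Subtype.val hc))] at this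
        exact this
      rw [hhz]
      ring
    have hlapx : G.lap fstar x₀ ≤ ∑ z ∈ G.sph x₀, G.q x₀ z * g z := by
      rw [G.lap_eq_sum_sph]
      apply Finset.sum_le_sum
      intro z hz
      have hadj : G.Adj x₀ z := G.mem_sph.mp hz
      have hzB : z ∈ Bx := hmemBx hadj
      have h1 : fstar z - fstar x₀ ≤ g z := by
        rw [hfsx₀]
        have := hfs_ub z hzB
        linarith
      exact mul_le_mul_of_nonneg_left h1 (G.q_nonneg' x₀ z)
    have hlapy : -G.lap fstar y₀ ≤ ∑ z ∈ G.sph y₀, G.q y₀ z * h z := by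
      rw [G.lap_eq_sum_sph, ← Finset.sum_neg_distrib]
      apply Finset.sum_le_sum
      intro z hz
      have hadj : G.Adj y₀ z := G.mem_sph.mp hz
      have hzB : z ∈ By := hmemBy hadj
      have h1 : fstar y₀ - fstar z ≤ h z := by
        rw [hfsy₀]
        have := hfs_lb z hzB
        linarith
      have h2 : -(G.q y₀ z * (fstar z - fstar y₀)) = G.q y₀ z * (fstar y₀ - fstar z) := by
        ring
      rw [h2]
      exact mul_le_mul_of_nonneg_left h1 (G.q_nonneg' y₀ z)
    -- conclude
    have hyb'' : Q < -t * (S + ε) := by linarith [hyb']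
    have hQmul : (n * lam) * Q < n * (S + ε) := by
      have h1 : (n * lam) * Q < (n * lam) * (-t * (S + ε)) :=
        (mul_lt_mul_iff_right₀ (mul_pos hnpos hlam)).mpr hyb''
      have h2 : (n * lam) * (-t * (S + ε)) = n * (S + ε) := by
        have : (n * lam) * (-t * (S + ε)) = n * (-(lam * t)) * (S + ε) := by ring
        rw [this, hlamt]
        ring
      linarith
    have hobj : G.lap fstar x₀ - G.lap fstar y₀ ≤ n * (S + ε) := by
      have h1 : G.lap fstar x₀ - G.lap fstar y₀
          ≤ (∑ z ∈ G.sph x₀, G.q x₀ z * g z) + ∑ z ∈ G.sph y₀, G.q y₀ z * h z := by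
        linarith [hlapx, hlapy]
      rw [hQx, hQy] at h1
      have h2 : (n * lam) * (∑ x : ↥Bx, b (Sum.inl x) * uR x)
          + (n * lam) * (∑ w : ↥By, b (Sum.inr (Sum.inl w)) * uC w) = (n * lam) * Q := by
        rw [hQ]; ring
      rw [h2] at h1
      linarith [hQmul]
    refine ⟨(G.lap fstar x₀ - G.lap fstar y₀) / (G.d x₀ y₀ : ℝ), ?_, ?_⟩
    · apply G.mem_kappaSet_of hconn hxy fstar hfsLip
      rw [hfsy₀, hfsx₀, hn]
      ring
    · rw [← hn]
      calc (G.lap fstar x₀ - G.lap fstar y₀) / n ≤ (n * (S + ε)) / n :=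
            div_le_div_of_nonneg_right hobj hnpos.le
        _ = S + ε := by field_simp

end WeightedGraph

/-- For a connected, locally finite weighted graph with
`Deg_max < ∞` and vertices `x₀ ≠ y₀`, the Ollivier curvature satisfies the
duality `κ(x₀,y₀) = sup_ρ Σ ρ(x,y) (1 - d(x,y)/d(x₀,y₀))` over all transport
plans `ρ` between `x₀` and `y₀`. -/
theorem ollivier_curvature_transport_duality
    {V : Type*} [Countable V] (G : WeightedGraph V)
    (hconn : G.toSimpleGraph.Connected)
    (hDeg : BddAbove (Set.range G.Deg))
    (x₀ y₀ : V) (hxy : x₀ ≠ y₀) :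
    G.kappa x₀ y₀ =
      sSup {c : ℝ | ∃ ρ : V → V → ℝ,
        G.IsTransportPlan x₀ y₀ ρ ∧ c = G.transportCost x₀ y₀ ρ} := by
  have hset : {c : ℝ | ∃ ρ : V → V → ℝ,
      G.IsTransportPlan x₀ y₀ ρ ∧ c = G.transportCost x₀ y₀ ρ} = G.costSet x₀ y₀ := rfl
  rw [hset, G.kappa_eq_sInf]
  obtain ⟨r₀, hr₀⟩ := G.kappaSet_nonempty hconn hxy
  obtain ⟨c₀, hc₀⟩ := G.costSet_nonempty (x₀ := x₀) (y₀ := y₀)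
  have hub : ∀ c ∈ G.costSet x₀ y₀, ∀ r ∈ G.kappaSet x₀ y₀, c ≤ r :=
    fun c hc r hr => G.weak_duality' hconn hxy hr hc
  have hKbdd : BddBelow (G.kappaSet x₀ y₀) := ⟨c₀, fun r hr => hub c₀ hc₀ r hr⟩
  apply le_antisymm
  · apply le_of_forall_pos_le_add
    intro ε hε
    obtain ⟨r, hr, hle⟩ := G.strong_duality hconn hxy hε
    exact le_trans (csInf_le hKbdd hr) hle
  · refine csSup_le ⟨c₀, hc₀⟩ (fun c hc => le_csInf ⟨r₀, hr₀⟩ (fun r hr => hub c hc r hr))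
end

section
/- Let G=(V,w,m) be a connected, locally finite weighted graph with D := Deg_max < ∞. Let f : V → ℝ be harmonic with ‖∇f‖_∞ = 1, let ε > 0, and let x₀ ≠ y₀ be vertices with f(x₀) − f(y₀) ≥ d(x₀,y₀) − ε. Then d(x₀,y₀)·κ(x₀,y₀) ≤ 2Dε. -/
open scoped BigOperators

section AuxHelpers

namespace WGaux

open SimpleGraph

section
variable {V : Type*} {SG : SimpleGraph V}

/-- If `g` decreases by at most 1 along each edge, it decreases by at most the
length along each walk. -/
lemma walk_bound {g : V → ℝ} (hg : ∀ a b, SG.Adj a b → g a - g b ≤ 1)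
    {u v : V} (p : SG.Walk u v) : g u - g v ≤ p.length := by
  induction p with
  | nil => simp
  | cons h q ih =>
      have h1 := hg _ _ h
      simp only [Walk.length_cons]
      push_cast
      linarith

lemma exists_edge_eq_one {g : V → ℝ} (hg : ∀ a b, SG.Adj a b → g a - g b ≤ 1) :
    ∀ {u v : V} (p : SG.Walk u v), g u - g v = p.length → p.length ≠ 0 →
      ∃ a b, SG.Adj a b ∧ g a - g b = 1 := by
  intro u v p
  induction p with
  | nil => intro _ h; simp at h
  | @cons u w v h q ih =>
      intro hp _
      simp only [Walk.length_cons] at hp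
      push_cast at hp
      have h1 := hg _ _ h
      have h2 := walk_bound hg q
      by_cases hq : q.length = 0
      · refine ⟨u, w, h, ?_⟩
        rw [hq] at hp; push_cast at hp
        have : g w - g v = 0 := by
          have := q.eq_of_length_eq_zero hq; subst this; ring
        linarith
      · exact ih (by linarith) hq

end

section
variable {V : Type*} (G : WeightedGraph V)

lemma q_nonneg (x y : V) : 0 ≤ G.q x y :=
  div_nonneg (G.w_nonneg x y) (G.m_pos x).le

lemma q_eq_zero_of_w_eq_zero {x y : V} (h : ¬ 0 < G.w x y) : G.q x y = 0 := by
  have : G.w x y = 0 := le_antisymm (not_lt.mp h) (G.w_nonneg x y)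
  simp [WeightedGraph.q, this]

lemma lap_eq_sum (f : V → ℝ) (x : V) :
    G.lap f x = ∑ y ∈ (G.locFin x).toFinset, G.q x y * (f y - f x) := by
  apply finsum_eq_sum_of_support_subset
  intro y hy
  simp only [Function.mem_support] at hy
  simp only [Set.Finite.coe_toFinset, Set.mem_setOf_eq]
  by_contra h
  exact hy (by rw [q_eq_zero_of_w_eq_zero G h]; ring)

lemma Deg_eq_sum (x : V) :
    G.Deg x = ∑ y ∈ (G.locFin x).toFinset, G.q x y := by
  apply finsum_eq_sum_of_support_subset
  intro y hy
  simp only [Function.mem_support] at hy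
  simp only [Set.Finite.coe_toFinset, Set.mem_setOf_eq]
  by_contra h
  exact hy (q_eq_zero_of_w_eq_zero G h)

lemma Deg_nonneg (x : V) : 0 ≤ G.Deg x := by
  rw [Deg_eq_sum]
  exact Finset.sum_nonneg fun y _ => q_nonneg G x y

lemma adj_d_eq_one {x y : V} (h : G.Adj x y) : G.d x y = 1 :=
  SimpleGraph.dist_eq_one_iff_adj.mpr h

end
end WGaux

end AuxHelpers

/-- If `f` is harmonic with `‖∇f‖_∞ = 1`, `ε > 0`, and
`f(x₀) - f(y₀) ≥ d(x₀,y₀) - ε` for `x₀ ≠ y₀`, then on a graph with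
`D = Deg_max < ∞` one has `d(x₀,y₀) κ(x₀,y₀) ≤ 2 D ε`. -/
theorem dist_mul_kappa_le_of_almost_rigid
    {V : Type*} [Countable V] (G : WeightedGraph V)
    (hconn : G.toSimpleGraph.Connected)
    (hDeg : BddAbove (Set.range G.Deg))
    (f : V → ℝ) (hharm : G.Harmonic f) (hgrad : G.gradNorm f = 1)
    (ε : ℝ) (hε : 0 < ε)
    (x₀ y₀ : V) (hxy : x₀ ≠ y₀)
    (hfd : (G.d x₀ y₀ : ℝ) - ε ≤ f x₀ - f y₀) :
    (G.d x₀ y₀ : ℝ) * G.kappa x₀ y₀ ≤ 2 * G.DegMax * ε := by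
  classical
  -- `f` is 1-Lipschitz along edges
  set Sf : Set ℝ := {r : ℝ | ∃ x y, G.Adj x y ∧ r = (f x - f y) / (G.d x y : ℝ)} with hSf
  have hgrad' : sSup Sf = 1 := hgrad
  have hBddf : BddAbove Sf := by
    by_contra h
    rw [Real.sSup_of_not_bddAbove h] at hgrad'
    norm_num at hgrad'
  have hedge : ∀ a b : V, G.toSimpleGraph.Adj a b → f a - f b ≤ 1 := by
    intro a b hab
    have hd1 : G.d a b = 1 := WGaux.adj_d_eq_one G hab
    have hmem : (f a - f b) / (G.d a b : ℝ) ∈ Sf := ⟨a, b, hab, rfl⟩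
    have h1 := le_csSup hBddf hmem
    rw [hgrad', hd1] at h1
    norm_num at h1
    linarith
  have hlip : ∀ (g : V → ℝ), (∀ a b : V, G.toSimpleGraph.Adj a b → g a - g b ≤ 1) →
      ∀ a b : V, g a - g b ≤ (G.d a b : ℝ) := by
    intro g hg a b
    obtain ⟨p, hp⟩ := hconn.exists_walk_length_eq_dist a b
    have := WGaux.walk_bound hg p
    rw [hp] at this
    exact this
  have hdcomm : ∀ a b : V, G.d a b = G.d b a := by
    intro a b; exact SimpleGraph.dist_comm
  have hd0 : 0 < G.d x₀ y₀ := hconn.pos_dist_of_ne hxy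
  have hdR : (0:ℝ) < (G.d x₀ y₀ : ℝ) := by exact_mod_cast hd0
  -- the defect δ
  set δ : ℝ := (G.d x₀ y₀ : ℝ) - (f x₀ - f y₀) with hδ
  have hδ0 : 0 ≤ δ := by
    have := hlip f hedge x₀ y₀
    simp only [hδ]; linarith
  have hδε : δ ≤ ε := by simp only [hδ]; linarith
  -- the test function g
  set g : V → ℝ := fun z => min (-(f z) + δ) (-(f x₀) + (G.d x₀ z : ℝ)) with hg
  have hgx₀ : g x₀ = -(f x₀) := by
    have hdx : G.d x₀ x₀ = 0 := SimpleGraph.dist_self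
    simp only [hg, hdx, Nat.cast_zero, add_zero]
    exact min_eq_right (by linarith)
  have hgy₀ : g y₀ = -(f y₀) + δ := by
    have he : -(f y₀) + δ = -(f x₀) + (G.d x₀ y₀ : ℝ) := by simp only [hδ]; ring
    simp only [hg, he, min_self]
  -- g is 1-Lipschitz along edges
  have hgedge : ∀ a b : V, G.toSimpleGraph.Adj a b → g a - g b ≤ 1 := by
    intro a b hab
    have h1 : f b - f a ≤ 1 := hedge b a hab.symm
    have h2 : (G.d x₀ a : ℝ) - (G.d x₀ b : ℝ) ≤ 1 := by
      have htri : G.d x₀ a ≤ G.d x₀ b + G.d b a := hconn.dist_triangle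
      have hba : G.d b a = 1 := WGaux.adj_d_eq_one G hab.symm
      rw [hba] at htri
      have : (G.d x₀ a : ℝ) ≤ (G.d x₀ b : ℝ) + 1 := by exact_mod_cast htri
      linarith
    rcases le_total (-(f b) + δ) (-(f x₀) + (G.d x₀ b : ℝ)) with hc | hc
    · have hb : g b = -(f b) + δ := min_eq_left hc
      have ha : g a ≤ -(f a) + δ := min_le_left _ _
      rw [hb]; linarith
    · have hb : g b = -(f x₀) + (G.d x₀ b : ℝ) := min_eq_right hc
      have ha : g a ≤ -(f x₀) + (G.d x₀ a : ℝ) := min_le_right _ _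
      rw [hb]; linarith
  have hglip := hlip g hgedge
  have hgd : g y₀ - g x₀ = (G.d x₀ y₀ : ℝ) := by
    rw [hgy₀, hgx₀]; simp only [hδ]; ring
  -- g has gradient norm 1
  set Sg : Set ℝ := {r : ℝ | ∃ x y, G.Adj x y ∧ r = (g x - g y) / (G.d x y : ℝ)} with hSg
  have hub : ∀ r ∈ Sg, r ≤ 1 := by
    rintro r ⟨a, b, hab, rfl⟩
    rw [WGaux.adj_d_eq_one G hab]
    norm_num
    linarith [hgedge a b hab]
  have hmem1 : (1:ℝ) ∈ Sg := by
    have hdyx : G.d y₀ x₀ ≠ 0 := by rw [← hdcomm]; omega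
    obtain ⟨p, hp⟩ := SimpleGraph.exists_walk_of_dist_ne_zero hdyx
    have hplen : g y₀ - g x₀ = (p.length : ℝ) := by
      rw [hgd, hp, hdcomm x₀ y₀]; rfl
    have hpne : p.length ≠ 0 := by rw [hp]; exact hdyx
    obtain ⟨a, b, hab, hab1⟩ := WGaux.exists_edge_eq_one hgedge p hplen hpne
    refine ⟨a, b, hab, ?_⟩
    rw [WGaux.adj_d_eq_one G hab, hab1]
    norm_num
  have hgradg : G.gradNorm f = 1 → G.gradNorm g = 1 := fun _ => by
    have : G.gradNorm g = sSup Sg := rfl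
    rw [this]
    exact le_antisymm (csSup_le ⟨1, hmem1⟩ hub) (le_csSup ⟨1, fun r hr => hub r hr⟩ hmem1)
  have hgradg1 : G.gradNorm g = 1 := hgradg hgrad
  -- Laplacian bounds for g
  have hlapx : G.lap g x₀ ≤ δ * G.Deg x₀ := by
    rw [WGaux.lap_eq_sum]
    have h0 : ∑ y ∈ (G.locFin x₀).toFinset, G.q x₀ y * (f y - f x₀) = 0 := by
      rw [← WGaux.lap_eq_sum]; exact hharm x₀
    calc ∑ y ∈ (G.locFin x₀).toFinset, G.q x₀ y * (g y - g x₀)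
        ≤ ∑ y ∈ (G.locFin x₀).toFinset, G.q x₀ y * (-(G.q x₀ y)⁻¹ * 0 + ((f x₀ - f y) + δ)) := by
          apply Finset.sum_le_sum
          intro y _
          apply mul_le_mul_of_nonneg_left _ (WGaux.q_nonneg G x₀ y)
          have hy : g y ≤ -(f y) + δ := min_le_left _ _
          rw [hgx₀]
          simp only [neg_mul, mul_zero, neg_zero, zero_add]
          linarith
      _ = ∑ y ∈ (G.locFin x₀).toFinset,
            (-(G.q x₀ y * (f y - f x₀)) + δ * G.q x₀ y) := by
          apply Finset.sum_congr rfl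
          intro y _; simp only [neg_mul, mul_zero, neg_zero, zero_add]; ring
      _ = -(∑ y ∈ (G.locFin x₀).toFinset, G.q x₀ y * (f y - f x₀))
            + δ * ∑ y ∈ (G.locFin x₀).toFinset, G.q x₀ y := by
          rw [Finset.sum_add_distrib, ← Finset.mul_sum, ← Finset.sum_neg_distrib]
      _ = δ * G.Deg x₀ := by rw [h0, ← WGaux.Deg_eq_sum]; ring
  have hlapy : -(δ * G.Deg y₀) ≤ G.lap g y₀ := by
    rw [WGaux.lap_eq_sum]
    have h0 : ∑ y ∈ (G.locFin y₀).toFinset, G.q y₀ y * (f y - f y₀) = 0 := by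
      rw [← WGaux.lap_eq_sum]; exact hharm y₀
    have hgey : ∀ y : V, -(f y) ≤ g y := by
      intro y
      apply le_min (by linarith)
      have h := hlip (fun z => -(f z))
        (fun a b hab => by linarith [hedge b a hab.symm]) y x₀
      rw [hdcomm y x₀] at h
      linarith
    calc -(δ * G.Deg y₀)
        = ∑ y ∈ (G.locFin y₀).toFinset,
            (-(G.q y₀ y * (f y - f y₀)) + -(δ * G.q y₀ y)) := by
          rw [Finset.sum_add_distrib, Finset.sum_neg_distrib, Finset.sum_neg_distrib,
            ← Finset.mul_sum, h0, ← WGaux.Deg_eq_sum]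
          ring
      _ = ∑ y ∈ (G.locFin y₀).toFinset, G.q y₀ y * ((f y₀ - f y) - δ) := by
          apply Finset.sum_congr rfl
          intro y _; ring
      _ ≤ ∑ y ∈ (G.locFin y₀).toFinset, G.q y₀ y * (g y - g y₀) := by
          apply Finset.sum_le_sum
          intro y _
          apply mul_le_mul_of_nonneg_left _ (WGaux.q_nonneg G y₀ y)
          have := hgey y
          rw [hgy₀]
          linarith
  -- Degree bounds
  have hDx : G.Deg x₀ ≤ G.DegMax := le_ciSup hDeg x₀
  have hDy : G.Deg y₀ ≤ G.DegMax := le_ciSup hDeg y₀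
  have hD0 : 0 ≤ G.DegMax := (WGaux.Deg_nonneg G x₀).trans hDx
  have hlapd : G.lap g x₀ - G.lap g y₀ ≤ 2 * G.DegMax * ε := by
    have h1 : δ * G.Deg x₀ ≤ ε * G.DegMax :=
      mul_le_mul hδε hDx (WGaux.Deg_nonneg G x₀) hε.le
    have h2 : δ * G.Deg y₀ ≤ ε * G.DegMax :=
      mul_le_mul hδε hDy (WGaux.Deg_nonneg G y₀) hε.le
    linarith
  -- the kappa set
  set S : Set ℝ := {r : ℝ | ∃ f : V → ℝ,
    (f y₀ - f x₀) / (G.d y₀ x₀ : ℝ) = 1 ∧ G.gradNorm f = 1 ∧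
    r = (G.lap f x₀ - G.lap f y₀) / (G.d x₀ y₀ : ℝ)} with hS
  have hkdef : G.kappa x₀ y₀ = sInf S := rfl
  have hmemS : (G.lap g x₀ - G.lap g y₀) / (G.d x₀ y₀ : ℝ) ∈ S := by
    refine ⟨g, ?_, hgradg1, rfl⟩
    rw [← hdcomm x₀ y₀, hgd]
    exact div_self (ne_of_gt hdR)
  by_cases hbb : BddBelow S
  · have hk : G.kappa x₀ y₀ ≤ (G.lap g x₀ - G.lap g y₀) / (G.d x₀ y₀ : ℝ) := by
      rw [hkdef]; exact csInf_le hbb hmemS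
    calc (G.d x₀ y₀ : ℝ) * G.kappa x₀ y₀
        ≤ (G.d x₀ y₀ : ℝ) * ((G.lap g x₀ - G.lap g y₀) / (G.d x₀ y₀ : ℝ)) :=
          mul_le_mul_of_nonneg_left hk hdR.le
      _ = G.lap g x₀ - G.lap g y₀ := by field_simp
      _ ≤ 2 * G.DegMax * ε := hlapd
  · rw [hkdef, Real.sInf_of_not_bddBelow hbb, mul_zero]
    positivity
end
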